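/- In the M-vine model (D-vine cross-sectional structure with equal in- and out-vertex permutations (i_1,...,i_d) = (j_1,...,j_d)), the restriction of the vine to any time window [t, t+m] is a vine, i.e., all levels of the restricted graph are connected trees. -/

import Mathlib

open Finset

variable {α : Type*} [DecidableEq α] [Fintype α]

/-- The simple graph on `α` induced by a finite set of unordered pairs. -/
def graphOf (E : Finset (Sym2 α)) : SimpleGraph α where
  Adj x y := x ≠ y ∧ s(x, y) ∈ E
  symm := ⟨by
    intro x y h
    refine ⟨h.1.symm, ?_⟩
    rw [Sym2.eq_swap]
    exact h.2⟩
  loopless := ⟨fun x h => h.1 rfl⟩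

/-- `(V, E)` is a finite tree: edges join distinct vertices of `V`, the induced
graph is acyclic, and all vertices of `V` are mutually reachable. -/
def IsTreeOn (V : Finset α) (E : Finset (Sym2 α)) : Prop :=
  (∀ e ∈ E, ∀ x ∈ e, x ∈ V) ∧ (∀ e ∈ E, ¬ e.IsDiag) ∧
    (graphOf E).IsAcyclic ∧ ∀ x ∈ V, ∀ y ∈ V, (graphOf E).Reachable x y

/-- Complete union of an edge: the union of the complete unions of its endpoints
(each vertex of a tree of the vine is identified with its complete union). -/
def eUnion (e : Sym2 (Finset α)) : Finset α :=
  Sym2.lift ⟨fun A B => A ∪ B, fun A B => union_comm A B⟩ e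

/-- Conditioning set `D_e` of an edge. -/
def condSet (e : Sym2 (Finset α)) : Finset α :=
  Sym2.lift ⟨fun A B => A ∩ B, fun A B => inter_comm A B⟩ e

/-- Conditioned set `{a_e, b_e}` of an edge. -/
def condPair (e : Sym2 (Finset α)) : Finset α :=
  Sym2.lift ⟨fun A B => symmDiff A B, fun A B => symmDiff_comm A B⟩ e

/-- A regular vine on a finite set `α` of `d = Fintype.card α` elements.  The
vertices of tree `k` (for `k = 1, …, d-1`) are identified with their complete
unions, subsets of `α`; `V (k+1) = E k` is expressed via complete unions. -/
structure RegularVine (α : Type*) [DecidableEq α] [Fintype α] where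
  V : ℕ → Finset (Finset α)
  E : ℕ → Finset (Sym2 (Finset α))
  hV1 : V 1 = Finset.univ.image (fun a : α => ({a} : Finset α))
  hVsucc : ∀ k, 1 ≤ k → V (k + 1) = (E k).image eUnion
  tree : ∀ k, 1 ≤ k → k + 1 ≤ Fintype.card α → IsTreeOn (V k) (E k)
  hEzero : ∀ k, k = 0 ∨ Fintype.card α ≤ k → E k = ∅
  proximity : ∀ k, 1 ≤ k → ∀ p ∈ E (k + 1),
    ∃ a ∈ E k, ∃ b ∈ E k, p = s(eUnion a, eUnion b) ∧ ∃ v, v ∈ a ∧ v ∈ b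

/-- A tree `(V, E)` is a path: it is a tree and every vertex has degree at most 2. -/
def IsPathOn (V : Finset α) (E : Finset (Sym2 α)) : Prop :=
  IsTreeOn V E ∧ ∀ v ∈ V, (E.filter (fun e => v ∈ e)).card ≤ 2

/-- A permutation `(i_1, …, i_d) = (σ 0, …, σ (d-1))` is compatible with a vine on
`Fin d`: for every `k` there is an edge of tree `k` with conditioned set
`{σ k, σ r}` (some `r < k`) and conditioning set `{σ 0, …, σ (k-1)} \ {σ r}`. -/
def Compatible {d : ℕ} (𝒱 : RegularVine (Fin d)) (σ : Fin d → Fin d) : Prop :=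
  ∀ k : Fin d, 1 ≤ (k : ℕ) → ∃ r : Fin d, r < k ∧ ∃ e ∈ 𝒱.E (k : ℕ),
    condPair e = {σ k, σ r} ∧
    condSet e = ((Finset.univ.filter (fun s : Fin d => s < k)).image σ).erase (σ r)


/-- Edges of the restriction of a vine on `{1,…,T} × {1,…,d}` to the time window
`[t, t+m]` (tree level `k`): edges all of whose labels have time index in the window. -/
def Ewin {T d : ℕ} (𝒱 : RegularVine (Fin T × Fin d)) (t m k : ℕ) :
    Finset (Sym2 (Finset (Fin T × Fin d))) :=
  (𝒱.E k).filter (fun e => ∀ x ∈ eUnion e, t ≤ (x.1 : ℕ) ∧ (x.1 : ℕ) ≤ t + m)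

/-- Vertices of the restriction to the time window `[t, t+m]`. -/
def Vwin {T d : ℕ} (𝒱 : RegularVine (Fin T × Fin d)) (t m k : ℕ) :
    Finset (Finset (Fin T × Fin d)) :=
  (𝒱.V k).filter (fun v => ∀ x ∈ v, t ≤ (x.1 : ℕ) ∧ (x.1 : ℕ) ≤ t + m)

/-- `S'` is the translation of `S` by `τ` time steps. -/
def IsShiftSet {T d : ℕ} (τ : ℤ) (S S' : Finset (Fin T × Fin d)) : Prop :=
  ∀ x : Fin T × Fin d, x ∈ S' ↔ ∃ y ∈ S, (x.1 : ℤ) = (y.1 : ℤ) + τ ∧ x.2 = y.2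

/-- `e'` is the translation of the edge `e` by `τ` time steps. -/
def IsShiftEdge {T d : ℕ} (τ : ℤ) (e e' : Sym2 (Finset (Fin T × Fin d))) : Prop :=
  ∃ A B A' B', e = s(A, B) ∧ e' = s(A', B') ∧ IsShiftSet τ A A' ∧ IsShiftSet τ B B'

/-- A vine on `{1,…,T} × {1,…,d}` is stationary: every restriction to a time window
is a translation of the restriction to any other window of the same length. -/
def Stationary {T d : ℕ} (𝒱 : RegularVine (Fin T × Fin d)) : Prop :=
  ∀ t s m : ℕ, t + m + 1 ≤ T → s + m + 1 ≤ T → ∀ k,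
    ∀ e ∈ Ewin 𝒱 t m k, ∃ e' ∈ Ewin 𝒱 s m k, IsShiftEdge ((s : ℤ) - (t : ℤ)) e e'

/-- Embed a cross-sectional label set at time `t`. -/
def timeEmbed {T d : ℕ} (t : Fin T) (A : Finset (Fin d)) : Finset (Fin T × Fin d) :=
  A.image (fun j => (t, j))

/-- `{(u, σ 0), …, (u, σ (n-1))}`. -/
def Tset {T d : ℕ} (u : Fin T) (σ : Fin d → Fin d) (n : ℕ) : Finset (Fin T × Fin d) :=
  (Finset.univ.filter (fun s : Fin d => (s : ℕ) < n)).image (fun s => (u, σ s))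

def tcast {T : ℕ} (t : Fin (T - 1)) : Fin T := Fin.castLE (Nat.sub_le T 1) t

def tsucc {T : ℕ} (t : Fin (T - 1)) : Fin T := ⟨(t : ℕ) + 1, by have := t.isLt; omega⟩

/-- The connecting edges of tree level `k ∈ {1,…,d}` of a stationary vine with
in-vertices `σ` and out-vertices `τ'` (explicit characterization, Theorem 3.5). -/
def connEdges (T d : ℕ) (σ τ' : Fin d → Fin d) (k : ℕ) :
    Finset (Sym2 (Finset (Fin T × Fin d))) :=
  (Finset.univ : Finset (Fin (T - 1))).biUnion (fun t =>
    (Finset.range k).image (fun r =>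
      s(Tset (tcast t) σ (k - r) ∪ Tset (tsucc t) τ' r,
        Tset (tcast t) σ (k - 1 - r) ∪ Tset (tsucc t) τ' (r + 1))))

/-- The edges of tree level `k ∈ {1,…,d}` of the stationary vine built from the
cross-sectional vine `V0` and the permutations `σ` (in) and `τ'` (out). -/
def svineEdges (T : ℕ) {d : ℕ} (V0 : RegularVine (Fin d)) (σ τ' : Fin d → Fin d)
    (k : ℕ) : Finset (Sym2 (Finset (Fin T × Fin d))) :=
  ((Finset.univ : Finset (Fin T)).biUnion
      (fun t => (V0.E k).image (Sym2.map (timeEmbed t))))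
    ∪ connEdges T d σ τ' k


namespace MV
set_option linter.unusedSectionVars false
open Finset

variable {α : Type*} [DecidableEq α] [Fintype α]

lemma eUnion_mk (A B : Finset α) : eUnion s(A, B) = A ∪ B := by simp [eUnion]

lemma condPair_union_condSet (e : Sym2 (Finset α)) :
    condPair e ∪ condSet e = eUnion e := by
  induction e using Sym2.ind with
  | _ A B =>
    simp only [condPair, condSet, eUnion, Sym2.lift_mk]
    ext x; by_cases hA : x ∈ A <;> by_cases hB : x ∈ B <;>
      simp [Finset.mem_symmDiff, hA, hB]

lemma graphOf_adj {E : Finset (Sym2 α)} {x y : α} :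
    (graphOf E).Adj x y ↔ x ≠ y ∧ s(x, y) ∈ E := Iff.rfl

lemma graphOf_mono {E F : Finset (Sym2 α)} (h : E ⊆ F) : graphOf E ≤ graphOf F :=
  fun _ _ hxy => ⟨hxy.1, h hxy.2⟩

lemma isAcyclic_mono {E F : Finset (Sym2 α)} (h : E ⊆ F)
    (hF : (graphOf F).IsAcyclic) : (graphOf E).IsAcyclic := by
  intro v c hc
  exact hF (c.mapLe (graphOf_mono h)) (hc.mapLe _)

lemma subset_eUnion_of_mem {e : Sym2 (Finset α)} {x : Finset α} (hx : x ∈ e) :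
    x ⊆ eUnion e := by
  induction e using Sym2.ind with
  | _ A B =>
    rw [Sym2.mem_iff] at hx
    rw [eUnion_mk]
    rcases hx with rfl | rfl
    · exact subset_union_left
    · exact subset_union_right

lemma eUnion_nonempty {e : Sym2 (Finset α)} (he : ¬ e.IsDiag) :
    (eUnion e).Nonempty := by
  induction e using Sym2.ind with
  | _ A B =>
    rw [Sym2.mk_isDiag_iff] at he
    rw [eUnion_mk]
    by_contra hne
    rw [Finset.not_nonempty_iff_eq_empty, Finset.union_eq_empty] at hne
    exact he (hne.1.trans hne.2.symm)

-- reachability along a chain of adjacent vertices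
lemma reach_chain {E : Finset (Sym2 α)} (u : ℕ → α) {i j : ℕ} (hij : i ≤ j)
    (h : ∀ p, i ≤ p → p < j → (graphOf E).Adj (u p) (u (p + 1))) :
    (graphOf E).Reachable (u i) (u j) := by
  induction j, hij using Nat.le_induction with
  | base => exact SimpleGraph.Reachable.refl _
  | succ jj hij ih =>
    exact (ih (fun p hp hpj => h p hp (by omega))).trans
      (h jj hij (by omega)).reachable

-- the cut lemma: a walk in a graph all of whose edges are consecutive pairs of an
-- injective sequence, going from index ≤ i to index ≥ i+1, must use edge (i, i+1)
lemma walk_cut {F : Finset (Sym2 α)} {u : ℕ → α} {N : ℕ}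
    (hinj : ∀ i ≤ N, ∀ j ≤ N, u i = u j → i = j)
    (hrep : ∀ e ∈ F, ∃ a, a + 1 ≤ N ∧ e = s(u a, u (a + 1)))
    {i : ℕ} (hi : i + 1 ≤ N) {p q : ℕ} (hp : p ≤ i) (hq : i + 1 ≤ q) (hqN : q ≤ N)
    (hr : (graphOf F).Reachable (u p) (u q)) : s(u i, u (i + 1)) ∈ F := by
  obtain ⟨w⟩ := hr
  suffices H : ∀ (x y : α) (w : (graphOf F).Walk x y) (p q : ℕ), x = u p → y = u q →
      p ≤ i → i + 1 ≤ q → q ≤ N → s(u i, u (i + 1)) ∈ F by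
    exact H _ _ w p q rfl rfl hp hq hqN
  clear hp hq hqN w p q
  intro x y w
  induction w with
  | nil =>
    intro p q hxp hyq hp hq hqN
    subst hxp
    have := hinj p (by omega) q hqN hyq
    omega
  | @cons x z y h w ih =>
    intro p q hxp hyq hp hq hqN
    subst hxp
    obtain ⟨a, ha, hae⟩ := hrep _ h.2
    rw [Sym2.eq_iff] at hae
    rcases hae with ⟨h1, h2⟩ | ⟨h1, h2⟩
    · -- u p = u a, z = u (a+1)
      have hpa : p = a := hinj p (by omega) a (by omega) h1
      by_cases hai : a = i
      · subst hai; rw [← h1, ← h2]; exact h.2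
      · exact ih (a + 1) q h2 hyq (by omega) hq hqN
    · -- u p = u (a+1), z = u a
      have hpa : p = a + 1 := hinj p (by omega) (a + 1) (by omega) h1
      exact ih a q h2 hyq (by omega) hq hqN

end MV

namespace MV2
set_option linter.unusedSectionVars false
open Finset Function

variable {T d : ℕ} {σ : Fin d → Fin d}

lemma mem_Tset {u : Fin T} {n : ℕ} {x : Fin T × Fin d} :
    x ∈ Tset u σ n ↔ ∃ s : Fin d, (s : ℕ) < n ∧ x = (u, σ s) := by
  simp only [Tset, mem_image, mem_filter, mem_univ, true_and]
  constructor
  · rintro ⟨s, hs, rfl⟩; exact ⟨s, hs, rfl⟩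
  · rintro ⟨s, hs, rfl⟩; exact ⟨s, hs, rfl⟩

lemma Tset_zero (u : Fin T) : Tset u σ 0 = ∅ := by
  ext x; simp [mem_Tset]

lemma time_of_mem_Tset {u : Fin T} {n : ℕ} {x : Fin T × Fin d}
    (h : x ∈ Tset u σ n) : x.1 = u := by
  rw [mem_Tset] at h; obtain ⟨s, _, rfl⟩ := h; rfl

lemma Tset_mono {u : Fin T} {n n' : ℕ} (h : n ≤ n') : Tset u σ n ⊆ Tset u σ n' := by
  intro x hx; rw [mem_Tset] at *; obtain ⟨s, hs, rfl⟩ := hx; exact ⟨s, by omega, rfl⟩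

lemma mem_Tset_pair {u u' : Fin T} {n : ℕ} {s : Fin d} (hσ : Injective σ) :
    (u', σ s) ∈ Tset u σ n ↔ u' = u ∧ (s : ℕ) < n := by
  rw [mem_Tset]
  constructor
  · rintro ⟨s', hs', h⟩
    rw [Prod.mk.injEq] at h
    obtain ⟨h1, h2⟩ := h
    have := hσ h2
    subst this
    exact ⟨h1, hs'⟩
  · rintro ⟨rfl, hs⟩; exact ⟨s, hs, rfl⟩

/-- The `i`-th vertex of the level-`d` path of the M-vine. -/
def Pv (T d : ℕ) (hT : 0 < T) (σ : Fin d → Fin d) (i : ℕ) : Finset (Fin T × Fin d) :=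
  Tset ⟨min (i / d) (T - 1), by omega⟩ σ (d - i % d) ∪
    Tset ⟨min (i / d + 1) (T - 1), by omega⟩ σ (i % d)

variable (hT : 0 < T)

lemma Pv_div_le (hd : 0 < d) {i : ℕ} (hi : i ≤ (T - 1) * d) : i / d ≤ T - 1 := by
  calc i / d ≤ (T - 1) * d / d := Nat.div_le_div_right hi
  _ = T - 1 := Nat.mul_div_cancel _ hd

lemma Pv_div_le' (hd : 0 < d) {i : ℕ} (hi : i ≤ (T - 1) * d) (hr : i % d ≠ 0) :
    i / d + 1 ≤ T - 1 := by
  have h1 := Pv_div_le hd hi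
  rcases Nat.lt_or_ge (i / d) (T - 1) with h | h
  · omega
  · exfalso
    have he : i / d = T - 1 := by omega
    have hdm := Nat.div_add_mod i d
    rw [he] at hdm
    have hc : (T - 1) * d = d * (T - 1) := Nat.mul_comm _ _
    omega

lemma mem_Pv (hd : 0 < d) {i : ℕ} (hi : i ≤ (T - 1) * d) {x : Fin T × Fin d} :
    x ∈ Pv T d hT σ i ↔
      (((x.1 : ℕ) = i / d ∧ ∃ s : Fin d, (s : ℕ) < d - i % d ∧ x.2 = σ s) ∨
       ((x.1 : ℕ) = i / d + 1 ∧ ∃ s : Fin d, (s : ℕ) < i % d ∧ x.2 = σ s)) := by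
  have h1 : min (i / d) (T - 1) = i / d := min_eq_left (Pv_div_le hd hi)
  rw [Pv, mem_union, mem_Tset, mem_Tset]
  constructor
  · rintro (⟨s, hs, rfl⟩ | ⟨s, hs, rfl⟩)
    · left; exact ⟨by simp [h1], s, hs, rfl⟩
    · right
      have hr : i % d ≠ 0 := by omega
      have h2 : min (i / d + 1) (T - 1) = i / d + 1 := min_eq_left (Pv_div_le' hd hi hr)
      exact ⟨by simp [h2], s, hs, rfl⟩
  · rintro (⟨ht, s, hs, hx2⟩ | ⟨ht, s, hs, hx2⟩)
    · left
      refine ⟨s, hs, ?_⟩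
      have : x.1 = (⟨min (i / d) (T - 1), by omega⟩ : Fin T) := by
        apply Fin.ext; simp [h1, ht]
      rw [Prod.ext_iff]; exact ⟨this, hx2⟩
    · right
      have hr : i % d ≠ 0 := by omega
      have h2 : min (i / d + 1) (T - 1) = i / d + 1 := min_eq_left (Pv_div_le' hd hi hr)
      refine ⟨s, hs, ?_⟩
      have : x.1 = (⟨min (i / d + 1) (T - 1), by omega⟩ : Fin T) := by
        apply Fin.ext; simp [h2, ht]
      rw [Prod.ext_iff]; exact ⟨this, hx2⟩

lemma Pv_fresh (hd : 0 < d) (hσ : Injective σ) {i : ℕ} (hi : i + 1 ≤ (T - 1) * d) :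
    ∃ x, x ∈ Pv T d hT σ (i + 1) ∧ ∀ l ≤ i, x ∉ Pv T d hT σ l := by
  have hdm := Nat.div_add_mod (i + 1) d
  have hmod : (i + 1) % d < d := Nat.mod_lt _ hd
  by_cases hr : (i + 1) % d = 0
  · -- fresh label (q, σ (d-1)) with q = (i+1)/d ≥ 1
    have hq1 : 1 ≤ (i + 1) / d := by
      rcases Nat.eq_zero_or_pos ((i + 1) / d) with h | h
      · rw [h] at hdm; omega
      · exact h
    have hqT : (i + 1) / d ≤ T - 1 := Pv_div_le hd (by omega)
    refine ⟨(⟨(i + 1) / d, by omega⟩, σ ⟨d - 1, by omega⟩), ?_, ?_⟩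
    · rw [mem_Pv hT hd (by omega)]
      left
      exact ⟨rfl, ⟨d - 1, by omega⟩, by show d - 1 < d - (i+1) % d; omega, rfl⟩
    · intro l hl hmem
      have hil : l ≤ (T - 1) * d := by omega
      rw [mem_Pv hT hd hil] at hmem
      have hldm := Nat.div_add_mod l d
      have hlmod : l % d < d := Nat.mod_lt _ (by omega)
      rcases hmem with ⟨ht, s, hs, hx2⟩ | ⟨ht, s, hs, hx2⟩
      · -- l / d = (i+1)/d forces l ≥ i+1
        have ht' : (i + 1) / d = l / d := ht
        rw [ht'] at hdm
        omega
      · -- second part: σ s = σ (d-1) so s = d-1 < l % d, impossible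
        have := hσ hx2.symm
        have hsv : (s : ℕ) = d - 1 := by rw [this]
        omega
  · -- fresh label (q+1, σ (r-1)) with q = (i+1)/d, r = (i+1)%d
    have hqT : (i + 1) / d + 1 ≤ T - 1 := Pv_div_le' hd (by omega) hr
    refine ⟨(⟨(i + 1) / d + 1, by omega⟩, σ ⟨(i + 1) % d - 1, by omega⟩), ?_, ?_⟩
    · rw [mem_Pv hT hd (by omega)]
      right
      exact ⟨rfl, ⟨(i + 1) % d - 1, by omega⟩, by show (i+1) % d - 1 < (i+1) % d; omega, rfl⟩
    · intro l hl hmem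
      have hil : l ≤ (T - 1) * d := by omega
      rw [mem_Pv hT hd hil] at hmem
      have hldm := Nat.div_add_mod l d
      have hlmod : l % d < d := Nat.mod_lt _ (by omega)
      have hdm2 := Nat.div_add_mod (i + 1) d
      rcases hmem with ⟨ht, s, hs, hx2⟩ | ⟨ht, s, hs, hx2⟩
      · -- l / d = (i+1)/d + 1 forces l ≥ (i+1)
        have ht' : (i + 1) / d + 1 = l / d := ht
        rw [← ht'] at hldm
        have hexp : d * ((i + 1) / d + 1) = d * ((i + 1) / d) + d :=
          Nat.mul_succ d _
        omega
      · -- l / d = (i+1)/d and s = r - 1 < l % d forces l ≥ i+1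
        have ht' : (i + 1) / d + 1 = l / d + 1 := ht
        have hsame : (i + 1) / d = l / d := by omega
        rw [hsame] at hdm
        have := hσ hx2.symm
        have hsv : (s : ℕ) = (i + 1) % d - 1 := by rw [this]
        omega

lemma Pv_win (hd : 0 < d) {i : ℕ} (hi : i ≤ (T - 1) * d) (a m : ℕ) :
    (∀ x ∈ Pv T d hT σ i, a ≤ (x.1 : ℕ) ∧ (x.1 : ℕ) ≤ a + m) ↔
      a * d ≤ i ∧ i ≤ (a + m) * d := by
  have hdm := Nat.div_add_mod i d
  have hmod : i % d < d := Nat.mod_lt _ hd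
  have hcomm : ∀ b : ℕ, b * d = d * b := fun b => Nat.mul_comm b d
  constructor
  · intro h
    have hx0 : ((⟨i / d, by have := Pv_div_le hd hi; omega⟩ : Fin T), σ ⟨0, hd⟩) ∈
        Pv T d hT σ i := by
      rw [mem_Pv hT hd hi]; left
      exact ⟨rfl, ⟨0, hd⟩, by show (0 : ℕ) < d - i % d; omega, rfl⟩
    have ha : a ≤ i / d := (h _ hx0).1
    have hb : i / d ≤ a + m := (h _ hx0).2
    constructor
    · have h1 : a * d ≤ i / d * d := Nat.mul_le_mul_right d ha
      have h2 := hcomm (i / d)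
      omega
    · by_cases hr : i % d = 0
      · have h1 : i / d * d ≤ (a + m) * d := Nat.mul_le_mul_right d hb
        have h2 := hcomm (i / d)
        omega
      · have hx1 : ((⟨i / d + 1, by have := Pv_div_le' hd hi hr; omega⟩ : Fin T),
            σ ⟨0, hd⟩) ∈ Pv T d hT σ i := by
          rw [mem_Pv hT hd hi]; right
          exact ⟨rfl, ⟨0, hd⟩, by show (0 : ℕ) < i % d; omega, rfl⟩
        have hb' : i / d + 1 ≤ a + m := (h _ hx1).2
        have h1 : (i / d + 1) * d ≤ (a + m) * d := Nat.mul_le_mul_right d hb'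
        have h2 := hcomm (i / d + 1)
        have h3 : d * (i / d + 1) = d * (i / d) + d := Nat.mul_succ d _
        omega
  · rintro ⟨h1, h2⟩ x hx
    rw [mem_Pv hT hd hi] at hx
    have ha : a ≤ i / d := (Nat.le_div_iff_mul_le hd).2 h1
    have hb : i / d ≤ a + m := by
      have := Nat.div_le_div_right (c := d) h2
      rwa [Nat.mul_div_cancel _ hd] at this
    rcases hx with ⟨ht, _⟩ | ⟨ht, s, hs, _⟩
    · omega
    · have hr : i % d ≠ 0 := by omega
      have hlt : i / d < a + m := by
        by_contra hcon
        have he : i / d = a + m := by omega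
        rw [he] at hdm
        have := hcomm (a + m)
        omega
      omega

end MV2

namespace MV3
set_option linter.unusedSectionVars false
set_option maxHeartbeats 1000000
open Finset Function MV MV2

variable {T d : ℕ} {𝒱 : RegularVine (Fin T × Fin d)}

lemma card_TD : Fintype.card (Fin T × Fin d) = T * d := by simp

/-- window predicate -/
def WS (a m : ℕ) (S : Finset (Fin T × Fin d)) : Prop :=
  ∀ x ∈ S, a ≤ (x.1 : ℕ) ∧ (x.1 : ℕ) ≤ a + m

lemma mem_Ewin {a m k : ℕ} {e : Sym2 (Finset (Fin T × Fin d))} :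
    e ∈ Ewin 𝒱 a m k ↔ e ∈ 𝒱.E k ∧ WS a m (eUnion e) := mem_filter

lemma mem_Vwin {a m k : ℕ} {w : Finset (Fin T × Fin d)} :
    w ∈ Vwin 𝒱 a m k ↔ w ∈ 𝒱.V k ∧ WS a m w := mem_filter

lemma Ewin_subset {a m k : ℕ} : Ewin 𝒱 a m k ⊆ 𝒱.E k := filter_subset _ _

lemma window_cond1 {a m k : ℕ} (htree : IsTreeOn (𝒱.V k) (𝒱.E k)) :
    ∀ e ∈ Ewin 𝒱 a m k, ∀ x ∈ e, x ∈ Vwin 𝒱 a m k := by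
  intro e he x hx
  rw [mem_Ewin] at he
  rw [mem_Vwin]
  exact ⟨htree.1 e he.1 x hx, fun y hy => he.2 y (subset_eUnion_of_mem hx hy)⟩

/-- Invariant: tree `k` of the vine is a path with vertex sequence `v 0, …, v n`,
each vertex introduces a fresh label, and window-restricted vertex sets are
contiguous segments. -/
structure PathInv (𝒱 : RegularVine (Fin T × Fin d)) (k n : ℕ)
    (v : ℕ → Finset (Fin T × Fin d)) : Prop where
  hV : 𝒱.V k = (Finset.range (n + 1)).image v
  hE : 𝒱.E k = (Finset.range n).image fun i => s(v i, v (i + 1))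
  fresh : ∀ i < n, ∃ x, x ∈ v (i + 1) ∧ ∀ l ≤ i, x ∉ v l
  convex : ∀ a m i j l : ℕ, i ≤ j → j ≤ l → l ≤ n →
      WS a m (v i) → WS a m (v l) → WS a m (v j)

variable {k n : ℕ} {v : ℕ → Finset (Fin T × Fin d)}

lemma PathInv.vinj (I : PathInv 𝒱 k n v) :
    ∀ i, i ≤ n → ∀ j, j ≤ n → v i = v j → i = j := by
  have key : ∀ i j, i < j → j ≤ n → v i ≠ v j := by
    intro i j hij hj hne
    obtain ⟨x, hx1, hx2⟩ := I.fresh (j - 1) (by omega)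
    have hj1 : j - 1 + 1 = j := by omega
    rw [hj1] at hx1
    exact hx2 i (by omega) (hne ▸ hx1)
  intro i hi j hj he
  rcases lt_trichotomy i j with h | h | h
  · exact absurd he (key _ _ h hj)
  · exact h
  · exact absurd he.symm (key _ _ h hi)

lemma PathInv.vmem (I : PathInv 𝒱 k n v) {i : ℕ} (hi : i ≤ n) : v i ∈ 𝒱.V k := by
  rw [I.hV, mem_image]; exact ⟨i, mem_range.2 (by omega), rfl⟩

lemma PathInv.succ (hk : 1 ≤ k) (hn : 1 ≤ n) (hcard : k + 2 ≤ T * d)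
    (I : PathInv 𝒱 k n v) :
    PathInv 𝒱 (k + 1) (n - 1) (fun i => v i ∪ v (i + 1)) := by
  set u : ℕ → Finset (Fin T × Fin d) := fun i => v i ∪ v (i + 1) with hu
  have htree := 𝒱.tree (k + 1) (by omega) (by rw [card_TD]; omega)
  -- vertices of level k+1
  have hV' : 𝒱.V (k + 1) = (Finset.range (n - 1 + 1)).image u := by
    rw [𝒱.hVsucc k hk, I.hE, image_image]
    have hrange : n - 1 + 1 = n := by omega
    rw [hrange]
    apply image_congr
    intro i _
    simp only [comp_apply, eUnion_mk, hu]
  have uinj : ∀ i, i ≤ n - 1 → ∀ j, j ≤ n - 1 → u i = u j → i = j := by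
    have key : ∀ i j, i < j → j ≤ n - 1 → u i ≠ u j := by
      intro i j hij hj hne
      obtain ⟨x, hx1, hx2⟩ := I.fresh j (by omega)
      have hxu : x ∈ u j := mem_union_right _ hx1
      rw [← hne, hu] at hxu
      rcases mem_union.1 hxu with h | h
      · exact hx2 i (by omega) h
      · exact hx2 (i + 1) (by omega) h
    intro i hi j hj he
    rcases lt_trichotomy i j with h | h | h
    · exact absurd he (key _ _ h hj)
    · exact h
    · exact absurd he.symm (key _ _ h hi)
  have umem : ∀ i, i ≤ n - 1 → u i ∈ 𝒱.V (k + 1) := by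
    intro i hi
    rw [hV', mem_image]
    exact ⟨i, mem_range.2 (by omega), rfl⟩
  -- every edge of level k+1 is a consecutive pair
  have hsub : ∀ p ∈ 𝒱.E (k + 1), ∃ a, a + 1 ≤ n - 1 ∧ p = s(u a, u (a + 1)) := by
    intro p hp
    obtain ⟨ea, hea, eb, heb, hpe, w, hw1, hw2⟩ := 𝒱.proximity k hk p hp
    rw [I.hE, mem_image] at hea heb
    obtain ⟨ia, hia, rfl⟩ := hea
    obtain ⟨ib, hib, rfl⟩ := heb
    rw [mem_range] at hia hib
    have hUa : eUnion s(v ia, v (ia + 1)) = u ia := eUnion_mk _ _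
    have hUb : eUnion s(v ib, v (ib + 1)) = u ib := eUnion_mk _ _
    rw [hUa, hUb] at hpe
    have hdiag := htree.2.1 p hp
    have hne : u ia ≠ u ib := by
      intro he
      rw [hpe, he] at hdiag
      exact hdiag (Sym2.mk_isDiag_iff.2 rfl)
    have hnee : ia ≠ ib := fun h => hne (by rw [h])
    -- the shared vertex forces |ia - ib| = 1
    rw [Sym2.mem_iff] at hw1 hw2
    have hidx : ia = ib + 1 ∨ ia + 1 = ib := by
      rcases hw1 with h1 | h1 <;> rcases hw2 with h2 | h2
      · have := I.vinj ia (by omega) ib (by omega) (h1.symm.trans h2)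
        omega
      · have := I.vinj ia (by omega) (ib + 1) (by omega) (h1.symm.trans h2)
        omega
      · have := I.vinj (ia + 1) (by omega) ib (by omega) (h1.symm.trans h2)
        omega
      · have := I.vinj (ia + 1) (by omega) (ib + 1) (by omega) (h1.symm.trans h2)
        omega
    rcases hidx with h | h
    · exact ⟨ib, by omega, by rw [hpe, ← h, Sym2.eq_swap]⟩
    · exact ⟨ia, by omega, by rw [hpe, h]⟩
  have hE' : 𝒱.E (k + 1) = (Finset.range (n - 1)).image fun i => s(u i, u (i + 1)) := by
    apply Finset.Subset.antisymm
    · intro p hp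
      obtain ⟨a, ha, rfl⟩ := hsub p hp
      rw [mem_image]
      exact ⟨a, mem_range.2 (by omega), rfl⟩
    · intro p hp
      rw [mem_image] at hp
      obtain ⟨i, hi, rfl⟩ := hp
      rw [mem_range] at hi
      have hreach := htree.2.2.2 (u i) (umem i (by omega)) (u (i + 1))
        (umem (i + 1) (by omega))
      exact walk_cut uinj hsub (by omega) (le_refl i) (le_refl (i + 1))
        (by omega) hreach
  refine ⟨hV', hE', ?_, ?_⟩
  · intro i hi
    obtain ⟨x, hx1, hx2⟩ := I.fresh (i + 1) (by omega)
    refine ⟨x, mem_union_right _ hx1, fun l hl hmem => ?_⟩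
    rcases mem_union.1 hmem with h | h
    · exact hx2 l (by omega) h
    · exact hx2 (l + 1) (by omega) h
  · intro a m i j l hij hjl hl hi0 hl0
    intro x hx
    rcases mem_union.1 hx with h | h
    · exact I.convex a m i j (l + 1) hij (by omega) (by omega)
        (fun y hy => hi0 y (mem_union_left _ hy))
        (fun y hy => hl0 y (mem_union_right _ hy)) x h
    · exact I.convex a m i (j + 1) (l + 1) (by omega) (by omega) (by omega)
        (fun y hy => hi0 y (mem_union_left _ hy))
        (fun y hy => hl0 y (mem_union_right _ hy)) x h

lemma PathInv.isTreeOn (I : PathInv 𝒱 k n v) (hk : 1 ≤ k) (hcard : k + 1 ≤ T * d)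
    (a m : ℕ) : IsTreeOn (Vwin 𝒱 a m k) (Ewin 𝒱 a m k) := by
  have htree := 𝒱.tree k hk (by rw [card_TD]; omega)
  refine ⟨window_cond1 htree, fun e he => htree.2.1 e (Ewin_subset he),
    isAcyclic_mono (filter_subset _ _) htree.2.2.1, ?_⟩
  -- reachability
  have step : ∀ p, p < n → WS a m (v p) → WS a m (v (p + 1)) →
      (graphOf (Ewin 𝒱 a m k)).Adj (v p) (v (p + 1)) := by
    intro p hp h1 h2
    constructor
    · intro he
      have := I.vinj p (by omega) (p + 1) (by omega) he
      omega
    · rw [mem_Ewin]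
      constructor
      · rw [I.hE, mem_image]
        exact ⟨p, mem_range.2 hp, rfl⟩
      · rw [eUnion_mk]
        intro y hy
        rcases mem_union.1 hy with h | h
        · exact h1 y h
        · exact h2 y h
  have key : ∀ ix iy, ix ≤ iy → iy ≤ n → WS a m (v ix) → WS a m (v iy) →
      (graphOf (Ewin 𝒱 a m k)).Reachable (v ix) (v iy) := by
    intro ix iy hxy hyn h1 h2
    exact reach_chain v hxy (fun p hp hpj => step p (by omega)
      (I.convex a m ix p iy hp (by omega) hyn h1 h2)
      (I.convex a m ix (p + 1) iy (by omega) (by omega) hyn h1 h2))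
  intro x hx y hy
  rw [mem_Vwin] at hx hy
  obtain ⟨hx1, hx2⟩ := hx
  obtain ⟨hy1, hy2⟩ := hy
  rw [I.hV, mem_image] at hx1 hy1
  obtain ⟨ix, hix, rfl⟩ := hx1
  obtain ⟨iy, hiy, rfl⟩ := hy1
  rw [mem_range] at hix hiy
  rcases le_total ix iy with h | h
  · exact key ix iy h (by omega) hx2 hy2
  · exact (key iy ix h (by omega) hy2 hx2).symm

end MV3

namespace MV4
set_option linter.unusedSectionVars false
set_option maxHeartbeats 1000000
open Finset Function MV MV2 MV3

variable {T d : ℕ} {σ : Fin d → Fin d} {V0 : RegularVine (Fin d)}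
  {𝒱 : RegularVine (Fin T × Fin d)}

/-- cross-sectional initial segment -/
def Cset (σ : Fin d → Fin d) (n : ℕ) : Finset (Fin d) :=
  (Finset.univ.filter fun s : Fin d => (s : ℕ) < n).image σ

lemma mem_timeEmbed {t : Fin T} {A : Finset (Fin d)} {x : Fin T × Fin d} :
    x ∈ timeEmbed t A ↔ ∃ j ∈ A, x = (t, j) := by
  simp only [timeEmbed, mem_image]
  constructor
  · rintro ⟨j, hj, rfl⟩; exact ⟨j, hj, rfl⟩
  · rintro ⟨j, hj, rfl⟩; exact ⟨j, hj, rfl⟩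

lemma timeEmbed_inj {t : Fin T} {A B : Finset (Fin d)}
    (h : timeEmbed t A = timeEmbed t B) : A = B := by
  have : Function.Injective (fun j : Fin d => ((t, j) : Fin T × Fin d)) := by
    intro a b hab
    simpa using congrArg Prod.snd hab
  exact Finset.image_injective this h

lemma timeEmbed_union {t : Fin T} {A B : Finset (Fin d)} :
    timeEmbed t (A ∪ B) = timeEmbed t A ∪ timeEmbed t B := image_union _ _

lemma eUnion_map_timeEmbed {t : Fin T} (e : Sym2 (Finset (Fin d))) :
    eUnion (Sym2.map (timeEmbed t) e) = timeEmbed t (eUnion e) := by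
  induction e using Sym2.ind with
  | _ A B => rw [Sym2.map_pair_eq, eUnion_mk, eUnion_mk, timeEmbed_union]

lemma Tset_eq_timeEmbed {u : Fin T} {n : ℕ} :
    Tset u σ n = timeEmbed u (Cset σ n) := by
  rw [Tset, Cset, timeEmbed, image_image]
  rfl

lemma Cset_full (hσ : Surjective σ) : Cset σ d = Finset.univ := by
  ext j
  simp only [Cset, mem_image, mem_filter, mem_univ, true_and, iff_true]
  obtain ⟨s, rfl⟩ := hσ j
  exact ⟨s, s.isLt, rfl⟩

lemma mem_Cset {n : ℕ} (hσ : Injective σ) {s : Fin d} :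
    σ s ∈ Cset σ n ↔ (s : ℕ) < n := by
  simp only [Cset, mem_image, mem_filter, mem_univ, true_and]
  constructor
  · rintro ⟨s', hs', he⟩
    rwa [hσ he] at hs'
  · intro h; exact ⟨s, h, rfl⟩

lemma hc_eUnion (hσ : Injective σ) (hc : Compatible V0 σ) {k' : ℕ}
    (h1 : 1 ≤ k') (h2 : k' ≤ d - 1) (hd : 1 ≤ d) :
    ∃ e ∈ V0.E k', eUnion e = Cset σ (k' + 1) := by
  have hk'd : k' < d := by omega
  obtain ⟨r, hr, e, he, hpair, hset⟩ := hc ⟨k', hk'd⟩ h1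
  have hrv : (r : ℕ) < k' := hr
  refine ⟨e, he, ?_⟩
  rw [← condPair_union_condSet e, hpair, hset]
  apply Finset.Subset.antisymm
  · apply union_subset
    · intro j hj
      rcases mem_insert.1 hj with rfl | hj
      · exact (mem_Cset hσ).2 (by show k' < k' + 1; omega)
      · rw [mem_singleton] at hj
        subst hj
        exact (mem_Cset hσ).2 (by omega)
    · intro j hj
      have hj' := mem_of_mem_erase hj
      obtain ⟨s, hs, rfl⟩ := mem_image.1 hj'
      have hs' : (s : ℕ) < k' := (mem_filter.1 hs).2
      exact (mem_Cset hσ).2 (by omega)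
  · intro j hj
    obtain ⟨s, hs, rfl⟩ := mem_image.1 hj
    have hs' : (s : ℕ) < k' + 1 := (mem_filter.1 hs).2
    by_cases hsk : (s : ℕ) = k'
    · apply mem_union_left
      apply mem_insert.2
      left
      congr 1
      exact Fin.ext hsk
    · by_cases hsr : s = r
      · subst hsr
        exact mem_union_left _ (mem_insert.2 (Or.inr (mem_singleton_self _)))
      · apply mem_union_right
        apply mem_erase.2
        refine ⟨fun he' => hsr (hσ he'), mem_image.2 ⟨s, mem_filter.2 ⟨mem_univ _, ?_⟩, rfl⟩⟩
        show (s : ℕ) < k'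
        omega

lemma divmod_eq {t r : ℕ} (hd : 0 < d) (hr : r < d) :
    (t * d + r) / d = t ∧ (t * d + r) % d = r := by
  constructor
  · rw [Nat.add_comm, Nat.add_mul_div_right _ _ hd, Nat.div_eq_of_lt hr]
    omega
  · rw [Nat.add_comm, Nat.add_mul_mod_self_right, Nat.mod_eq_of_lt hr]

lemma Tset_congr {u u' : Fin T} {a a' : ℕ} (h1 : (u : ℕ) = (u' : ℕ)) (h2 : a = a') :
    Tset u σ a = Tset u' σ a' := by
  subst h2
  have : u = u' := Fin.ext h1
  rw [this]

variable (hT : 0 < T)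

lemma Pv_index {t : Fin (T - 1)} {r : ℕ} (hd : 0 < d) (hr : r < d) :
    Pv T d hT σ ((t : ℕ) * d + r) =
      Tset (tcast t) σ (d - r) ∪ Tset (tsucc t) σ r := by
  obtain ⟨h1, h2⟩ := divmod_eq (t := (t : ℕ)) hd hr
  have htl := t.isLt
  rw [Pv]
  refine congrArg₂ (· ∪ ·) (Tset_congr ?_ ?_) (Tset_congr ?_ ?_)
  · simp only [tcast, Fin.coe_castLE]
    rw [h1]
    omega
  · rw [h2]
  · simp only [tsucc]
    rw [h1]
    omega
  · rw [h2]

lemma Pv_row (hd : 0 < d) {t : ℕ} (ht : t ≤ T - 1) :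
    Pv T d hT σ (t * d) = Tset (⟨t, by omega⟩ : Fin T) σ d := by
  obtain ⟨h1, h2⟩ := divmod_eq (t := t) (r := 0) hd hd
  rw [Nat.add_zero] at h1 h2
  rw [Pv, ← union_empty (Tset (⟨t, by omega⟩ : Fin T) σ d)]
  refine congrArg₂ (· ∪ ·) (Tset_congr ?_ ?_) ?_
  · simp only
    rw [h1]
    omega
  · omega
  · exact (Tset_congr rfl h2).trans (Tset_zero _)

end MV4

namespace MV5
set_option linter.unusedSectionVars false
set_option maxHeartbeats 1000000
open Finset Function MV MV2 MV3 MV4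

variable {T d : ℕ} {σ : Fin d → Fin d} {V0 : RegularVine (Fin d)}
  {𝒱 : RegularVine (Fin T × Fin d)} (hT : 0 < T)

lemma conn_edge_eq (hd : 0 < d) (t : Fin (T - 1)) {r : ℕ} (hr : r < d) :
    s(Tset (tcast t) σ (d - r) ∪ Tset (tsucc t) σ r,
      Tset (tcast t) σ (d - 1 - r) ∪ Tset (tsucc t) σ (r + 1))
    = s(Pv T d hT σ ((t : ℕ) * d + r), Pv T d hT σ ((t : ℕ) * d + r + 1)) := by
  have htl := t.isLt
  refine congrArg₂ (fun A B => s(A, B)) (Pv_index hT hd hr).symm ?_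
  by_cases hr1 : r + 1 < d
  · rw [show (t : ℕ) * d + r + 1 = (t : ℕ) * d + (r + 1) from rfl, Pv_index hT hd hr1]
    exact congrArg₂ (· ∪ ·) (Tset_congr rfl (by omega)) rfl
  · have hr1' : r + 1 = d := by omega
    have hA : (t : ℕ) * d + r + 1 = ((t : ℕ) + 1) * d := by
      have h2 : ((t : ℕ) + 1) * d = (t : ℕ) * d + d := by ring
      omega
    rw [hA, Pv_row hT hd (by omega)]
    rw [show Tset (tcast t) σ (d - 1 - r) = (∅ : Finset (Fin T × Fin d)) from
      (Tset_congr rfl (by omega)).trans (Tset_zero _), empty_union]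
    exact Tset_congr rfl hr1'

lemma conn_eq (hd : 0 < d) :
    connEdges T d σ σ d = (Finset.range ((T - 1) * d)).image
      (fun i => s(Pv T d hT σ i, Pv T d hT σ (i + 1))) := by
  ext p
  simp only [connEdges, mem_biUnion, mem_image, mem_range, mem_univ, true_and]
  constructor
  · rintro ⟨t, r, hr, rfl⟩
    have htl := t.isLt
    refine ⟨(t : ℕ) * d + r, ?_, (conn_edge_eq hT hd t hr).symm⟩
    have h1 : ((t : ℕ) + 1) * d ≤ (T - 1) * d := Nat.mul_le_mul_right d (by omega)
    have h2 : ((t : ℕ) + 1) * d = (t : ℕ) * d + d := by ring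
    omega
  · rintro ⟨i, hi, rfl⟩
    have hdm := Nat.div_add_mod i d
    have hmod : i % d < d := Nat.mod_lt _ hd
    have htlt : i / d < T - 1 := by
      by_contra hcon
      have h1 : T - 1 ≤ i / d := by omega
      have h2 : (T - 1) * d ≤ i / d * d := Nat.mul_le_mul_right d h1
      have h3 : i / d * d = d * (i / d) := Nat.mul_comm _ _
      omega
    refine ⟨⟨i / d, htlt⟩, i % d, hmod, ?_⟩
    have := conn_edge_eq (σ := σ) hT hd ⟨i / d, htlt⟩ hmod
    rw [this]
    have hi' : (i / d) * d + i % d = i := by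
      have := Nat.mul_comm (i / d) d
      omega
    rw [show ((⟨i / d, htlt⟩ : Fin (T - 1)) : ℕ) * d + i % d = i from hi']

lemma base_Ed (hd : 0 < d)
    (hfirst : ∀ k, 1 ≤ k → k ≤ d → 𝒱.E k = svineEdges T V0 σ σ k) :
    𝒱.E d = (Finset.range ((T - 1) * d)).image
      (fun i => s(Pv T d hT σ i, Pv T d hT σ (i + 1))) := by
  rw [hfirst d hd le_rfl, svineEdges]
  have hcross : V0.E d = ∅ := V0.hEzero d (Or.inr (by simp))
  rw [hcross]
  have hbi : ((Finset.univ : Finset (Fin T)).biUnion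
      fun t => (∅ : Finset (Sym2 (Finset (Fin d)))).image (Sym2.map (timeEmbed t)))
      = ∅ := by ext x; simp
  rw [hbi, empty_union]
  exact conn_eq hT hd

lemma cross_mem_E {k : ℕ} (hk1 : 1 ≤ k) (hkd : k ≤ d)
    (hfirst : ∀ k, 1 ≤ k → k ≤ d → 𝒱.E k = svineEdges T V0 σ σ k)
    (t : Fin T) {e0 : Sym2 (Finset (Fin d))} (he0 : e0 ∈ V0.E k) :
    Sym2.map (timeEmbed t) e0 ∈ 𝒱.E k := by
  rw [hfirst k hk1 hkd, svineEdges]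
  exact mem_union_left _ (mem_biUnion.2 ⟨t, mem_univ _, mem_image_of_mem _ he0⟩)

lemma time_of_mem_timeEmbed {t : Fin T} {A : Finset (Fin d)} {x : Fin T × Fin d}
    (h : x ∈ timeEmbed t A) : x.1 = t := by
  obtain ⟨j, _, rfl⟩ := mem_timeEmbed.1 h
  rfl

lemma timeEmbed_zero_eq_Pv (hσ : Bijective σ) (hd : 0 < d) {S : Finset (Fin d)}
    {j : ℕ} (hj : j ≤ (T - 1) * d)
    (h : timeEmbed (⟨0, by omega⟩ : Fin T) S = Pv T d hT σ j) :
    S = Finset.univ := by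
  have htime : ∀ x ∈ Pv T d hT σ j, 0 ≤ (x.1 : ℕ) ∧ (x.1 : ℕ) ≤ 0 + 0 := by
    intro x hx
    rw [← h] at hx
    have := time_of_mem_timeEmbed hx
    have hv : (x.1 : ℕ) = 0 := by rw [this]
    omega
  have hj0 : j = 0 := by
    have := (Pv_win hT hd hj 0 0).1 htime
    have hz : 0 * d = 0 := Nat.zero_mul d
    omega
  subst hj0
  have hP0 : Pv T d hT σ 0 = timeEmbed (⟨0, by omega⟩ : Fin T) Finset.univ := by
    have h := Pv_row (σ := σ) hT hd (t := 0) (by omega)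
    rw [Nat.zero_mul] at h
    rw [h, Tset_eq_timeEmbed, Cset_full hσ.2]
  rw [hP0] at h
  exact timeEmbed_inj h

lemma exists_adj_of_walk {β : Type*} {G : SimpleGraph β} {x y : β} (w : G.Walk x y)
    (h : x ≠ y) : ∃ z, G.Adj x z := by
  cases w with
  | nil => exact absurd rfl h
  | cons h' _ => exact ⟨_, h'⟩

include hT in
lemma eUnion_univ_claim (hT2 : 2 ≤ T) (hd2 : 2 ≤ d) (hσ : Bijective σ)
    (hc : Compatible V0 σ)
    (hfirst : ∀ k, 1 ≤ k → k ≤ d → 𝒱.E k = svineEdges T V0 σ σ k) :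
    ∀ e0 ∈ V0.E (d - 1), eUnion e0 = Finset.univ := by
  intro e0 he0
  by_contra hne
  have hd0 : 0 < d := by omega
  have hd1 : 1 ≤ d - 1 := by omega
  have hVd : 𝒱.V d = (𝒱.E (d - 1)).image eUnion := by
    have := 𝒱.hVsucc (d - 1) hd1
    rwa [show d - 1 + 1 = d by omega] at this
  have hx : timeEmbed (⟨0, by omega⟩ : Fin T) (eUnion e0) ∈ 𝒱.V d := by
    rw [hVd]
    exact mem_image.2 ⟨Sym2.map (timeEmbed ⟨0, by omega⟩) e0,
      cross_mem_E hd1 (by omega) hfirst _ he0, eUnion_map_timeEmbed e0⟩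
  obtain ⟨e', he', hU'⟩ := hc_eUnion hσ.1 hc hd1 le_rfl (by omega)
  have hU'' : eUnion e' = Finset.univ := by
    rw [hU', show d - 1 + 1 = d by omega, Cset_full hσ.2]
  have hrow : timeEmbed (⟨1, by omega⟩ : Fin T) Finset.univ ∈ 𝒱.V d := by
    rw [hVd]
    exact mem_image.2 ⟨Sym2.map (timeEmbed ⟨1, by omega⟩) e',
      cross_mem_E hd1 (by omega) hfirst _ he',
      by rw [eUnion_map_timeEmbed, hU'']⟩
  have hSne : (eUnion e0).Nonempty := by
    have ht0 := V0.tree (d - 1) hd1 (by simp only [Fintype.card_fin]; omega)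
    exact eUnion_nonempty (ht0.2.1 e0 he0)
  obtain ⟨y, hy⟩ := hSne
  have hxr : timeEmbed (⟨0, by omega⟩ : Fin T) (eUnion e0) ≠
      timeEmbed (⟨1, by omega⟩ : Fin T) Finset.univ := by
    intro h
    have hmem : ((⟨0, by omega⟩ : Fin T), y) ∈
        timeEmbed (⟨1, by omega⟩ : Fin T) Finset.univ := by
      rw [← h]
      exact mem_timeEmbed.2 ⟨y, hy, rfl⟩
    have := time_of_mem_timeEmbed hmem
    have : (0 : ℕ) = 1 := congrArg Fin.val this
    omega
  have htd := 𝒱.tree d hd0 (by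
    rw [card_TD]
    have h1 : 2 * d ≤ T * d := Nat.mul_le_mul_right d hT2
    omega)
  obtain ⟨w⟩ := htd.2.2.2 _ hx _ hrow
  obtain ⟨z, hadj⟩ := exists_adj_of_walk w hxr
  have hed : s(timeEmbed (⟨0, by omega⟩ : Fin T) (eUnion e0), z) ∈ 𝒱.E d := hadj.2
  rw [base_Ed hT hd0 hfirst] at hed
  obtain ⟨i, hi, heq⟩ := mem_image.1 hed
  rw [mem_range] at hi
  rw [Sym2.eq_iff] at heq
  rcases heq with ⟨h1, -⟩ | ⟨-, h1⟩
  · exact hne (timeEmbed_zero_eq_Pv hT hσ hd0 (show i ≤ (T - 1) * d by omega) h1.symm)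
  · exact hne (timeEmbed_zero_eq_Pv hT hσ hd0 (show i + 1 ≤ (T - 1) * d by omega) h1.symm)

lemma conn_eUnion (hd2 : 2 ≤ d) (t : Fin (T - 1)) {ρ : ℕ} (hρ : ρ < d - 1) :
    eUnion s(Tset (tcast t) σ (d - 1 - ρ) ∪ Tset (tsucc t) σ ρ,
             Tset (tcast t) σ (d - 1 - 1 - ρ) ∪ Tset (tsucc t) σ (ρ + 1))
    = Pv T d hT σ ((t : ℕ) * d + (ρ + 1)) := by
  have hd0 : 0 < d := by omega
  rw [eUnion_mk, Pv_index hT hd0 (show ρ + 1 < d by omega)]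
  have e1 : Tset (tcast t) σ (d - 1 - ρ) = Tset (tcast t) σ (d - (ρ + 1)) :=
    Tset_congr rfl (by omega)
  have h1 : Tset (tcast t) σ (d - 1 - 1 - ρ) ⊆ Tset (tcast t) σ (d - (ρ + 1)) :=
    by rw [← e1]; exact Tset_mono (by omega)
  have h2 : Tset (tsucc t) σ ρ ⊆ Tset (tsucc t) σ (ρ + 1) := Tset_mono (by omega)
  rw [e1]
  apply Finset.Subset.antisymm
  · refine union_subset (union_subset subset_union_left
      (h2.trans subset_union_right))
      (union_subset (h1.trans subset_union_left) subset_union_right)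
  · exact union_subset (subset_union_left.trans subset_union_left)
      (subset_union_right.trans subset_union_right)

lemma base_Vd (hT2 : 2 ≤ T) (hd2 : 2 ≤ d) (hσ : Bijective σ)
    (hc : Compatible V0 σ)
    (hfirst : ∀ k, 1 ≤ k → k ≤ d → 𝒱.E k = svineEdges T V0 σ σ k) :
    𝒱.V d = (Finset.range ((T - 1) * d + 1)).image (Pv T d hT σ) := by
  have hd0 : 0 < d := by omega
  have hd1 : 1 ≤ d - 1 := by omega
  have hVd : 𝒱.V d = (𝒱.E (d - 1)).image eUnion := by
    have := 𝒱.hVsucc (d - 1) hd1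
    rwa [show d - 1 + 1 = d by omega] at this
  rw [hVd, hfirst (d - 1) hd1 (by omega), svineEdges, image_union]
  apply Finset.Subset.antisymm
  · apply union_subset
    · -- cross part
      intro w hw
      obtain ⟨e1, he1, rfl⟩ := mem_image.1 hw
      obtain ⟨t, _, he1'⟩ := mem_biUnion.1 he1
      obtain ⟨e0, he0, rfl⟩ := mem_image.1 he1'
      rw [eUnion_map_timeEmbed, eUnion_univ_claim hT hT2 hd2 hσ hc hfirst e0 he0]
      have hP : Pv T d hT σ ((t : ℕ) * d) = timeEmbed t Finset.univ := by
        rw [Pv_row hT hd0 (by have := t.isLt; omega), Tset_eq_timeEmbed,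
          Cset_full hσ.2]
      rw [← hP]
      refine mem_image.2 ⟨(t : ℕ) * d, mem_range.2 ?_, rfl⟩
      have := Nat.mul_le_mul_right d (show (t : ℕ) ≤ T - 1 by have := t.isLt; omega)
      omega
    · -- conn part
      intro w hw
      obtain ⟨e1, he1, rfl⟩ := mem_image.1 hw
      obtain ⟨t, _, he1'⟩ := mem_biUnion.1 he1
      obtain ⟨ρ, hρ, rfl⟩ := mem_image.1 he1'
      rw [mem_range] at hρ
      rw [conn_eUnion hT hd2 t hρ]
      refine mem_image.2 ⟨(t : ℕ) * d + (ρ + 1), mem_range.2 ?_, rfl⟩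
      have h1 : ((t : ℕ) + 1) * d ≤ (T - 1) * d :=
        Nat.mul_le_mul_right d (by have := t.isLt; omega)
      have h2 : ((t : ℕ) + 1) * d = (t : ℕ) * d + d := by ring
      omega
  · intro w hw
    obtain ⟨i, hi, rfl⟩ := mem_image.1 hw
    rw [mem_range] at hi
    have hdm := Nat.div_add_mod i d
    have hmod : i % d < d := Nat.mod_lt _ hd0
    have hdiv : i / d ≤ T - 1 := Pv_div_le hd0 (by omega)
    by_cases hr : i % d = 0
    · -- row vertex, comes from the cross part
      apply mem_union_left
      obtain ⟨e', he', hU'⟩ := hc_eUnion hσ.1 hc hd1 le_rfl (by omega)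
      have hU'' : eUnion e' = Finset.univ := by
        rw [hU', show d - 1 + 1 = d by omega, Cset_full hσ.2]
      refine mem_image.2 ⟨Sym2.map (timeEmbed (⟨i / d, by omega⟩ : Fin T)) e',
        mem_biUnion.2 ⟨⟨i / d, by omega⟩, mem_univ _, mem_image_of_mem _ he'⟩, ?_⟩
      rw [eUnion_map_timeEmbed, hU'']
      have h := Pv_row (σ := σ) hT hd0 hdiv (t := i / d)
      rw [show i / d * d = i from by have := Nat.mul_comm (i / d) d; omega] at h
      rw [h, Tset_eq_timeEmbed, Cset_full hσ.2]
    · -- mixed vertex, comes from the conn part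
      apply mem_union_right
      have htlt : i / d < T - 1 := by
        by_contra hcon
        have h1 : T - 1 ≤ i / d := by omega
        have h2 : (T - 1) * d ≤ i / d * d := Nat.mul_le_mul_right d h1
        have h3 : i / d * d = d * (i / d) := Nat.mul_comm _ _
        omega
      have hρ : i % d - 1 < d - 1 := by omega
      refine mem_image.2 ⟨_, mem_biUnion.2 ⟨⟨i / d, htlt⟩, mem_univ _,
        mem_image.2 ⟨i % d - 1, mem_range.2 hρ, rfl⟩⟩, ?_⟩
      rw [conn_eUnion hT hd2 _ hρ]
      congr 1
      show (i / d) * d + (i % d - 1 + 1) = i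
      have := Nat.mul_comm (i / d) d
      omega

lemma base_Vd_d1 {σ : Fin 1 → Fin 1} {𝒱 : RegularVine (Fin T × Fin 1)} :
    𝒱.V 1 = (Finset.range ((T - 1) * 1 + 1)).image (Pv T 1 hT σ) := by
  have hPv : ∀ i : ℕ, ∀ _hi : i ≤ T - 1,
      Pv T 1 hT σ i = {((⟨i, by omega⟩ : Fin T), σ ⟨0, by omega⟩)} := by
    intro i hi
    have h1 : i / 1 = i := Nat.div_one i
    have h2 : i % 1 = 0 := Nat.mod_one i
    rw [Pv]
    have e2 : Tset (⟨min (i / 1 + 1) (T - 1), by omega⟩ : Fin T) σ (i % 1) = ∅ :=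
      (Tset_congr rfl h2).trans (Tset_zero _)
    rw [e2, union_empty]
    have hmin : i / 1 ⊓ (T - 1) = i := by
      rw [Nat.div_one]
      exact min_eq_left (by omega)
    ext x
    rw [MV2.mem_Tset, mem_singleton]
    constructor
    · rintro ⟨s, -, rfl⟩
      rw [Prod.ext_iff]
      exact ⟨Fin.ext hmin, congrArg σ (Subsingleton.elim _ _)⟩
    · rintro rfl
      refine ⟨⟨0, by omega⟩, by show (0 : ℕ) < 1 - i % 1; omega, ?_⟩
      rw [Prod.ext_iff]
      exact ⟨Fin.ext hmin.symm, congrArg σ (Subsingleton.elim _ _)⟩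
  rw [𝒱.hV1]
  apply Finset.Subset.antisymm
  · intro w hw
    obtain ⟨a, _, rfl⟩ := mem_image.1 hw
    have hm1 : (T - 1) * 1 = T - 1 := Nat.mul_one _
    refine mem_image.2 ⟨(a.1 : ℕ), mem_range.2 (by have := a.1.isLt; omega), ?_⟩
    rw [hPv (a.1 : ℕ) (by have := a.1.isLt; omega)]
    have h1 : (⟨(a.1 : ℕ), by omega⟩ : Fin T) = a.1 := Fin.ext rfl
    have h2 : σ ⟨0, by omega⟩ = a.2 := Subsingleton.elim _ _
    rw [h1, h2]
  · intro w hw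
    obtain ⟨i, hi, rfl⟩ := mem_image.1 hw
    rw [mem_range, Nat.mul_one] at hi
    rw [hPv i (by omega)]
    exact mem_image.2 ⟨_, mem_univ _, rfl⟩

lemma base_inv (hd : 1 ≤ d) (hTd : 2 ≤ T ∨ d = 1) (hσ : Bijective σ)
    (hc : Compatible V0 σ)
    (hfirst : ∀ k, 1 ≤ k → k ≤ d → 𝒱.E k = svineEdges T V0 σ σ k) :
    PathInv 𝒱 d ((T - 1) * d) (Pv T d hT σ) := by
  refine ⟨?_, base_Ed hT (by omega) hfirst, fun i hi => Pv_fresh hT (by omega)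
    hσ.1 (by omega), ?_⟩
  · rcases hTd with hT2 | hd1
    · by_cases hd2 : 2 ≤ d
      · exact base_Vd hT hT2 hd2 hσ hc hfirst
      · have hd1 : d = 1 := by omega
        subst hd1
        exact base_Vd_d1 hT
    · subst hd1
      exact base_Vd_d1 hT
  · intro a m i j l hij hjl hl hwi hwl
    have h1 := (Pv_win hT (by omega) (show i ≤ (T - 1) * d by omega) a m).1 hwi
    have h2 := (Pv_win hT (by omega) (show l ≤ (T - 1) * d by omega) a m).1 hwl
    exact (Pv_win hT (by omega) (show j ≤ (T - 1) * d by omega) a m).2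
      ⟨by omega, by omega⟩

include hT in
lemma inv_at (hd : 1 ≤ d) (hTd : 2 ≤ T ∨ d = 1) (hσ : Bijective σ)
    (hc : Compatible V0 σ)
    (hfirst : ∀ k, 1 ≤ k → k ≤ d → 𝒱.E k = svineEdges T V0 σ σ k) :
    ∀ k, d ≤ k → k + 1 ≤ T * d → ∃ v, PathInv 𝒱 k (T * d - k) v := by
  intro k hk
  induction k, hk using Nat.le_induction with
  | base =>
    intro _
    refine ⟨Pv T d hT σ, ?_⟩
    have hsm : (T - 1) * d = T * d - 1 * d := Nat.sub_mul T 1 d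
    rw [one_mul] at hsm
    rw [show T * d - d = (T - 1) * d by omega]
    exact base_inv hT hd hTd hσ hc hfirst
  | succ k hk ih =>
    intro hcard
    obtain ⟨v, I⟩ := ih (by omega)
    have I2 := I.succ (by omega) (by omega) (by omega)
    rw [show T * d - k - 1 = T * d - (k + 1) by omega] at I2
    exact ⟨_, I2⟩

end MV5

namespace MV6
set_option linter.unusedSectionVars false
set_option maxHeartbeats 1000000
open Finset Function MV MV2 MV3 MV4 MV5

variable {T d : ℕ} {σ : Fin d → Fin d} {V0 : RegularVine (Fin d)}
  {𝒱 : RegularVine (Fin T × Fin d)}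

/-- clamp a natural number into `Fin T` -/
def TF (T : ℕ) (hT : 0 < T) (u : ℕ) : Fin T := ⟨min u (T - 1), by omega⟩

variable (hT : 0 < T)

lemma TF_val {u : ℕ} (hu : u ≤ T - 1) : ((TF T hT u : Fin T) : ℕ) = u := by
  simp only [TF]
  omega

lemma reach_trans_chain {β : Type*} {G : SimpleGraph β} (f : ℕ → β) {i j : ℕ}
    (hij : i ≤ j) (h : ∀ p, i ≤ p → p < j → G.Reachable (f p) (f (p + 1))) :
    G.Reachable (f i) (f j) := by
  induction j, hij using Nat.le_induction with
  | base => exact SimpleGraph.Reachable.refl _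
  | succ jj hij ih =>
    exact (ih (fun p hp hpj => h p hp (by omega))).trans (h jj hij (by omega))

lemma Ck_mem (hd : 0 < d) (hk1 : 1 ≤ k) (hkd : k + 1 ≤ d) (hσ : Injective σ)
    (hc : Compatible V0 σ) : Cset σ k ∈ V0.V k := by
  rcases Nat.lt_or_ge k 2 with hk2 | hk2
  · have hk : k = 1 := by omega
    subst hk
    rw [V0.hV1, mem_image]
    refine ⟨σ ⟨0, hd⟩, mem_univ _, ?_⟩
    ext j
    rw [mem_singleton]
    constructor
    · rintro rfl
      exact (mem_Cset hσ).2 Nat.zero_lt_one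
    · intro hj
      obtain ⟨s, hs, rfl⟩ := mem_image.1 hj
      have hs' : (s : ℕ) < 1 := (mem_filter.1 hs).2
      have : s = ⟨0, hd⟩ := Fin.ext (by show (s : ℕ) = 0; omega)
      rw [this]
  · have hV : V0.V k = (V0.E (k - 1)).image eUnion := by
      have := V0.hVsucc (k - 1) (by omega)
      rwa [show k - 1 + 1 = k by omega] at this
    obtain ⟨e, he, hU⟩ := hc_eUnion hσ hc (show 1 ≤ k - 1 by omega)
      (show k - 1 ≤ d - 1 by omega) (by omega)
    rw [hV]
    refine mem_image.2 ⟨e, he, ?_⟩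
    rw [hU, show k - 1 + 1 = k by omega]

lemma cross_edge_mem_Ewin {k a m : ℕ} (hk1 : 1 ≤ k) (hkd : k ≤ d)
    (hfirst : ∀ k, 1 ≤ k → k ≤ d → 𝒱.E k = svineEdges T V0 σ σ k)
    {u : ℕ} (hu : a ≤ u) (hu2 : u ≤ a + m) (hw : a + m + 1 ≤ T)
    {e0 : Sym2 (Finset (Fin d))} (he0 : e0 ∈ V0.E k) :
    Sym2.map (timeEmbed (TF T hT u)) e0 ∈ Ewin 𝒱 a m k := by
  rw [mem_Ewin]
  constructor
  · exact cross_mem_E hk1 hkd hfirst _ he0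
  · intro x hx
    rw [eUnion_map_timeEmbed] at hx
    have := time_of_mem_timeEmbed hx
    have hval : (x.1 : ℕ) = u := by rw [this]; exact TF_val hT (by omega)
    omega

lemma cross_reach {k a m : ℕ} (hk1 : 1 ≤ k) (hkd : k + 1 ≤ d)
    (hfirst : ∀ k, 1 ≤ k → k ≤ d → 𝒱.E k = svineEdges T V0 σ σ k)
    {u : ℕ} (hu : a ≤ u) (hu2 : u ≤ a + m) (hw : a + m + 1 ≤ T)
    {A B : Finset (Fin d)} (hA : A ∈ V0.V k) (hB : B ∈ V0.V k) :
    (graphOf (Ewin 𝒱 a m k)).Reachable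
      (timeEmbed (TF T hT u) A) (timeEmbed (TF T hT u) B) := by
  have htree0 := V0.tree k hk1 (by simp only [Fintype.card_fin]; omega)
  obtain ⟨w⟩ := htree0.2.2.2 A hA B hB
  clear hA hB
  induction w with
  | nil => exact SimpleGraph.Reachable.refl _
  | @cons X Y Z h p ih =>
    refine SimpleGraph.Reachable.trans ?_ ih
    apply SimpleGraph.Adj.reachable
    refine ⟨fun he => h.1 (timeEmbed_inj he), ?_⟩
    rw [show s(timeEmbed (TF T hT u) X, timeEmbed (TF T hT u) Y)
      = Sym2.map (timeEmbed (TF T hT u)) s(X, Y) from (Sym2.map_pair_eq _ _ _).symm]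
    exact cross_edge_mem_Ewin hT hk1 (by omega) hfirst hu hu2 hw h.2

lemma conn_edge_mem_Ewin {k a m : ℕ} (hk1 : 1 ≤ k) (hkd : k + 1 ≤ d)
    (hfirst : ∀ k, 1 ≤ k → k ≤ d → 𝒱.E k = svineEdges T V0 σ σ k)
    {u r : ℕ} (hu : a ≤ u) (hu2 : u + 1 ≤ a + m) (hw : a + m + 1 ≤ T) (hr : r < k) :
    s(Tset (TF T hT u) σ (k - r) ∪ Tset (TF T hT (u + 1)) σ r,
      Tset (TF T hT u) σ (k - (r + 1)) ∪ Tset (TF T hT (u + 1)) σ (r + 1))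
      ∈ Ewin 𝒱 a m k := by
  have huT : u ≤ T - 1 := by omega
  have huT1 : u + 1 ≤ T - 1 := by omega
  rw [mem_Ewin]
  constructor
  · rw [hfirst k hk1 (by omega), svineEdges]
    apply mem_union_right
    refine mem_biUnion.2 ⟨⟨u, by omega⟩, mem_univ _,
      mem_image.2 ⟨r, mem_range.2 hr, ?_⟩⟩
    refine congrArg₂ (fun A B => s(A, B)) (congrArg₂ (· ∪ ·) ?_ ?_)
      (congrArg₂ (· ∪ ·) ?_ ?_)
    · exact Tset_congr (by simp only [tcast, Fin.coe_castLE]; rw [TF_val hT huT]) rfl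
    · exact Tset_congr (by simp only [tsucc]; rw [TF_val hT huT1]) rfl
    · exact Tset_congr (by simp only [tcast, Fin.coe_castLE]; rw [TF_val hT huT])
        (by omega)
    · exact Tset_congr (by simp only [tsucc]; rw [TF_val hT huT1]) rfl
  · intro x hx
    rw [eUnion_mk] at hx
    have hval : (x.1 : ℕ) = u ∨ (x.1 : ℕ) = u + 1 := by
      rcases mem_union.1 hx with h | h <;> rcases mem_union.1 h with h' | h' <;>
        [left; right; left; right] <;>
        · have := time_of_mem_Tset h'
          rw [this]
          first
          | exact TF_val hT huT
          | exact TF_val hT huT1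
    omega

lemma chain_reach {k a m : ℕ} (hk1 : 1 ≤ k) (hkd : k + 1 ≤ d)
    (hfirst : ∀ k, 1 ≤ k → k ≤ d → 𝒱.E k = svineEdges T V0 σ σ k)
    {u : ℕ} (hu : a ≤ u) (hu2 : u + 1 ≤ a + m) (hw : a + m + 1 ≤ T)
    {r : ℕ} (hr : r ≤ k) :
    (graphOf (Ewin 𝒱 a m k)).Reachable (Tset (TF T hT u) σ k)
      (Tset (TF T hT u) σ (k - r) ∪ Tset (TF T hT (u + 1)) σ r) := by
  induction r with
  | zero =>
    rw [Tset_zero, union_empty, Nat.sub_zero]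
  | succ r ih =>
    refine (ih (by omega)).trans (SimpleGraph.Adj.reachable ?_)
    have hmem := conn_edge_mem_Ewin hT hk1 hkd hfirst hu hu2 hw (show r < k by omega)
    refine ⟨?_, hmem⟩
    intro he
    have hE : s(Tset (TF T hT u) σ (k - r) ∪ Tset (TF T hT (u + 1)) σ r,
        Tset (TF T hT u) σ (k - (r + 1)) ∪ Tset (TF T hT (u + 1)) σ (r + 1))
        ∈ 𝒱.E k := Ewin_subset hmem
    have htree := 𝒱.tree k hk1 (by
      rw [card_TD]
      have : d ≤ T * d := Nat.le_mul_of_pos_left d hT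
      omega)
    have := htree.2.1 _ hE
    exact this (Sym2.mk_isDiag_iff.2 he)

lemma C_step {k a m : ℕ} (hk1 : 1 ≤ k) (hkd : k + 1 ≤ d)
    (hfirst : ∀ k, 1 ≤ k → k ≤ d → 𝒱.E k = svineEdges T V0 σ σ k)
    {u : ℕ} (hu : a ≤ u) (hu2 : u + 1 ≤ a + m) (hw : a + m + 1 ≤ T) :
    (graphOf (Ewin 𝒱 a m k)).Reachable (Tset (TF T hT u) σ k)
      (Tset (TF T hT (u + 1)) σ k) := by
  have h := chain_reach hT hk1 hkd hfirst hu hu2 hw (le_refl k)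
  rwa [show k - k = 0 by omega, Tset_zero, empty_union] at h

lemma C_reach {k a m : ℕ} (hk1 : 1 ≤ k) (hkd : k + 1 ≤ d)
    (hfirst : ∀ k, 1 ≤ k → k ≤ d → 𝒱.E k = svineEdges T V0 σ σ k)
    {u : ℕ} (hu : a ≤ u) (hu2 : u ≤ a + m) (hw : a + m + 1 ≤ T) :
    (graphOf (Ewin 𝒱 a m k)).Reachable (Tset (TF T hT a) σ k)
      (Tset (TF T hT u) σ k) := by
  exact reach_trans_chain (fun p => Tset (TF T hT p) σ k) hu
    (fun p hp hpj => C_step hT hk1 hkd hfirst hp (by omega) hw)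

include hT in
lemma caterpillar (hd : 0 < d) {k : ℕ} (hk1 : 1 ≤ k) (hkd : k + 1 ≤ d)
    (hσ : Bijective σ) (hc : Compatible V0 σ)
    (hfirst : ∀ k, 1 ≤ k → k ≤ d → 𝒱.E k = svineEdges T V0 σ σ k)
    {a m : ℕ} (hw : a + m + 1 ≤ T) :
    IsTreeOn (Vwin 𝒱 a m k) (Ewin 𝒱 a m k) := by
  have htree := 𝒱.tree k hk1 (by
    rw [card_TD]
    have : d ≤ T * d := Nat.le_mul_of_pos_left d hT
    omega)
  refine ⟨window_cond1 htree, fun e he => htree.2.1 e (Ewin_subset he),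
    isAcyclic_mono (filter_subset _ _) htree.2.2.1, ?_⟩
  -- every window vertex reaches the anchor Tset (TF a) σ k
  have hanchor : ∀ w ∈ Vwin 𝒱 a m k,
      (graphOf (Ewin 𝒱 a m k)).Reachable w (Tset (TF T hT a) σ k) := by
    intro w hw'
    rw [mem_Vwin] at hw'
    obtain ⟨hw1, hw2⟩ := hw'
    have hCk : Cset σ k ∈ V0.V k := Ck_mem hd hk1 hkd hσ.1 hc
    rcases Nat.lt_or_ge k 2 with hk2 | hk2
    · -- k = 1
      have hk : k = 1 := by omega
      subst hk
      rw [𝒱.hV1, mem_image] at hw1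
      obtain ⟨x, _, rfl⟩ := hw1
      have hwin : a ≤ (x.1 : ℕ) ∧ (x.1 : ℕ) ≤ a + m := hw2 x (mem_singleton_self x)
      have hxe : ({x} : Finset (Fin T × Fin d)) = timeEmbed (TF T hT (x.1 : ℕ)) {x.2} := by
        ext y
        rw [mem_singleton, mem_timeEmbed]
        constructor
        · intro hy
          rw [hy]
          exact ⟨x.2, mem_singleton_self _, by
            rw [Prod.ext_iff]
            exact ⟨Fin.ext (TF_val hT (by omega)).symm, rfl⟩⟩
        · rintro ⟨j, hj, rfl⟩
          rw [mem_singleton] at hj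
          subst hj
          rw [Prod.ext_iff]
          exact ⟨Fin.ext (TF_val hT (by omega)), rfl⟩
      have hx2 : ({x.2} : Finset (Fin d)) ∈ V0.V 1 := by
        rw [V0.hV1]
        exact mem_image.2 ⟨x.2, mem_univ _, rfl⟩
      rw [hxe]
      refine (cross_reach hT hk1 hkd hfirst hwin.1 hwin.2 hw hx2 hCk).trans ?_
      rw [← Tset_eq_timeEmbed]
      exact (C_reach hT hk1 hkd hfirst hwin.1 hwin.2 hw).symm
    · -- k ≥ 2
      have hV : 𝒱.V k = (𝒱.E (k - 1)).image eUnion := by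
        have := 𝒱.hVsucc (k - 1) (by omega)
        rwa [show k - 1 + 1 = k by omega] at this
      rw [hV, hfirst (k - 1) (by omega) (by omega), svineEdges, image_union] at hw1
      rcases mem_union.1 hw1 with hcr | hcn
      · -- cross vertex
        obtain ⟨e1, he1, rfl⟩ := mem_image.1 hcr
        obtain ⟨t, -, he1'⟩ := mem_biUnion.1 he1
        obtain ⟨e0, he0, rfl⟩ := mem_image.1 he1'
        rw [eUnion_map_timeEmbed] at hw2 ⊢
        have hA : eUnion e0 ∈ V0.V k := by
          have := V0.hVsucc (k - 1) (by omega)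
          rw [show k - 1 + 1 = k by omega] at this
          rw [this]
          exact mem_image_of_mem _ he0
        have hAne : (eUnion e0).Nonempty := by
          have ht0 := V0.tree (k - 1) (by omega) (by simp only [Fintype.card_fin]; omega)
          exact eUnion_nonempty (ht0.2.1 e0 he0)
        obtain ⟨y, hy⟩ := hAne
        have hty : ((t, y) : Fin T × Fin d) ∈ timeEmbed t (eUnion e0) :=
          mem_timeEmbed.2 ⟨y, hy, rfl⟩
        have htwin : a ≤ (t : ℕ) ∧ (t : ℕ) ≤ a + m := hw2 _ hty
        have htT : t = TF T hT (t : ℕ) := Fin.ext (TF_val hT (by omega)).symm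
        rw [htT]
        refine (cross_reach hT hk1 hkd hfirst htwin.1 htwin.2 hw hA hCk).trans ?_
        rw [← Tset_eq_timeEmbed]
        exact (C_reach hT hk1 hkd hfirst htwin.1 htwin.2 hw).symm
      · -- conn vertex
        obtain ⟨e1, he1, rfl⟩ := mem_image.1 hcn
        obtain ⟨t, -, he1'⟩ := mem_biUnion.1 he1
        obtain ⟨ρ, hρ, rfl⟩ := mem_image.1 he1'
        rw [mem_range] at hρ
        have htl := t.isLt
        have hUe : eUnion s(Tset (tcast t) σ (k - 1 - ρ) ∪ Tset (tsucc t) σ ρ,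
            Tset (tcast t) σ (k - 1 - 1 - ρ) ∪ Tset (tsucc t) σ (ρ + 1))
            = Tset (tcast t) σ (k - 1 - ρ) ∪ Tset (tsucc t) σ (ρ + 1) := by
          rw [eUnion_mk]
          have h1 : Tset (tcast t) σ (k - 1 - 1 - ρ) ⊆ Tset (tcast t) σ (k - 1 - ρ) :=
            Tset_mono (by omega)
          have h2 : Tset (tsucc t) σ ρ ⊆ Tset (tsucc t) σ (ρ + 1) := Tset_mono (by omega)
          apply Finset.Subset.antisymm
          · exact union_subset (union_subset subset_union_left
              (h2.trans subset_union_right))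
              (union_subset (h1.trans subset_union_left) subset_union_right)
          · exact union_subset (subset_union_left.trans subset_union_left)
              (subset_union_right.trans subset_union_right)
        rw [hUe] at hw2 ⊢
        -- window bounds: both times in the window
        have hmem1 : ((tcast t, σ ⟨0, hd⟩) : Fin T × Fin d) ∈
            Tset (tcast t) σ (k - 1 - ρ) ∪ Tset (tsucc t) σ (ρ + 1) := by
          apply mem_union_left
          rw [MV2.mem_Tset]
          exact ⟨⟨0, hd⟩, by show (0 : ℕ) < k - 1 - ρ; omega, rfl⟩
        have hmem2 : ((tsucc t, σ ⟨0, hd⟩) : Fin T × Fin d) ∈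
            Tset (tcast t) σ (k - 1 - ρ) ∪ Tset (tsucc t) σ (ρ + 1) := by
          apply mem_union_right
          rw [MV2.mem_Tset]
          exact ⟨⟨0, hd⟩, by show (0 : ℕ) < ρ + 1; omega, rfl⟩
        have h1 := hw2 _ hmem1
        have h2 := hw2 _ hmem2
        simp only [tcast, Fin.coe_castLE, tsucc] at h1 h2
        -- rewrite as the chain vertex X (t) (ρ+1)
        have hXeq : Tset (tcast t) σ (k - 1 - ρ) ∪ Tset (tsucc t) σ (ρ + 1)
            = Tset (TF T hT (t : ℕ)) σ (k - (ρ + 1)) ∪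
              Tset (TF T hT ((t : ℕ) + 1)) σ (ρ + 1) := by
          refine congrArg₂ (· ∪ ·) ?_ ?_
          · exact Tset_congr (by simp only [tcast, Fin.coe_castLE]; rw [TF_val hT (by omega)]) (by omega)
          · exact Tset_congr (by simp only [tsucc]; rw [TF_val hT (by omega)]) rfl
        rw [hXeq]
        refine ((chain_reach hT hk1 hkd hfirst h1.1 (by omega) hw
          (show ρ + 1 ≤ k by omega)).symm).trans ?_
        exact (C_reach hT hk1 hkd hfirst h1.1 (by omega) hw).symm
  intro x hx y hy
  exact (hanchor x hx).trans (hanchor y hy).symm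

end MV6

/-- In the M-vine model (stationary vine with D-vine cross-sectional structure and
equal in- and out-vertex permutations), the restriction of the vine to any time
window `[t, t+m]` is again a vine: all levels of the restricted graph are trees. -/
theorem mvine_restriction_is_vine {T d : ℕ} (hT : 1 ≤ T) (hd : 1 ≤ d)
    (V0 : RegularVine (Fin d)) (hpath : IsPathOn (V0.V 1) (V0.E 1))
    (σ : Fin d → Fin d) (hσ : Function.Bijective σ) (hc : Compatible V0 σ)
    (𝒱 : RegularVine (Fin T × Fin d)) (hstat : Stationary 𝒱)
    (hfirst : ∀ k, 1 ≤ k → k ≤ d → 𝒱.E k = svineEdges T V0 σ σ k) :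
    ∀ t m : ℕ, t + m + 1 ≤ T → ∀ k, 1 ≤ k → k + 1 ≤ (m + 1) * d →
      IsTreeOn (Vwin 𝒱 t m k) (Ewin 𝒱 t m k) := by
  intro t m htm k hk1 hkb
  have hT0 : 0 < T := hT
  rcases Nat.lt_or_ge k d with hkd | hkd
  · exact MV6.caterpillar hT0 hd hk1 (by omega) hσ hc hfirst htm
  · have hm1T : m + 1 ≤ T := by omega
    have hbound : k + 1 ≤ T * d := by
      have h1 : (m + 1) * d ≤ T * d := Nat.mul_le_mul_right d hm1T
      omega
    have hTd : 2 ≤ T ∨ d = 1 := by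
      by_cases hd1 : d = 1
      · right; exact hd1
      · left
        rcases Nat.eq_zero_or_pos m with hm | hm
        · subst hm; omega
        · omega
    obtain ⟨v, I⟩ := MV5.inv_at hT0 hd hTd hσ hc hfirst k hkd hbound
    exact I.isTreeOn (by omega) hbound t m
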